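/- Consider the univariate recursion X_{n+1} = A_{n+1} X_n + B_{n+1} where (A_n, B_n) are i.i.d., A_n > 0 and B_n ≥ 0 almost surely, P(B = 0) < 1, E|log A| < ∞, E|log B| < ∞, and E[log A] > 0. Then for any starting point x_0 ≥ 0, almost surely lim_{n→∞} (1/n) log X_n = E[log A]. -/

import Mathlib

open MeasureTheory ProbabilityTheory Filter Finset Topology

private lemma aux_shift_div {u : ℕ → ℝ} {δ : ℝ}
    (h : Tendsto (fun n : ℕ => u n / n) atTop (𝓝 δ)) :
    Tendsto (fun n : ℕ => u (n + 1) / n) atTop (𝓝 δ) := by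
  have h1 : Tendsto (fun n : ℕ => u (n + 1) / (n + 1 : ℝ)) atTop (𝓝 δ) := by
    have := h.comp (tendsto_add_atTop_nat 1)
    apply this.congr
    intro n
    simp [Function.comp]
  have h2 : Tendsto (fun n : ℕ => ((n : ℝ) + 1) / n) atTop (𝓝 1) := by
    have : Tendsto (fun n : ℕ => 1 + 1 / (n : ℝ)) atTop (𝓝 (1 + 0)) :=
      tendsto_const_nhds.add tendsto_one_div_atTop_nhds_zero_nat
    apply Tendsto.congr' _ (by simpa using this)
    filter_upwards [eventually_ge_atTop 1] with n hn
    have : (n : ℝ) ≠ 0 := Nat.cast_ne_zero.mpr (by omega)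
    field_simp
  have := (h1.mul h2)
  rw [mul_one] at this
  apply this.congr'
  filter_upwards [eventually_ge_atTop 1] with n hn
  have hn0 : (n : ℝ) ≠ 0 := Nat.cast_ne_zero.mpr (by omega)
  have hn1 : (n : ℝ) + 1 ≠ 0 := by positivity
  field_simp

private lemma aux_cesaro_diff {f : ℕ → ℝ} {δ : ℝ}
    (h : Tendsto (fun n : ℕ => (∑ i ∈ range n, f i) / n) atTop (𝓝 δ)) :
    Tendsto (fun n : ℕ => f n / n) atTop (𝓝 0) := by
  have h1 : Tendsto (fun n : ℕ => (∑ i ∈ range (n + 1), f i) / n) atTop (𝓝 δ) :=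
    aux_shift_div h
  have := h1.sub h
  rw [sub_self] at this
  apply this.congr
  intro n
  rw [sum_range_succ]
  ring

private lemma aux_det {a b : ℕ → ℝ} {x0 γ : ℝ} (ha : ∀ n, 0 < a n) (hb : ∀ n, 0 ≤ b n)
    (hx0 : 0 ≤ x0) (hγ : 0 < γ)
    (hs : Tendsto (fun n : ℕ => (∑ i ∈ range n, Real.log (a i)) / n) atTop (𝓝 γ))
    (hm : Tendsto (fun n : ℕ => Real.log (max (b n) 1) / n) atTop (𝓝 0))
    (k₀ : ℕ) (hk₀ : 0 < b k₀)
    (X : ℕ → ℝ) (hX0 : X 0 = x0) (hXs : ∀ n, X (n + 1) = a n * X n + b n) :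
    Tendsto (fun n : ℕ => Real.log (X n) / n) atTop (𝓝 γ) := by
  set s : ℕ → ℝ := fun n => ∑ i ∈ range n, Real.log (a i) with hs_def
  set P : ℕ → ℝ := fun n => ∏ i ∈ range n, a i with hP_def
  have hP : ∀ n, 0 < P n := fun n => Finset.prod_pos (fun i _ => ha i)
  have hsP : ∀ n, Real.log (P n) = s n := fun n =>
    Real.log_prod (fun i _ => (ha i).ne')
  have hPexp : ∀ n, P n = Real.exp (s n) := fun n => by
    rw [← hsP n, Real.exp_log (hP n)]
  set t : ℕ → ℝ := fun k => b k / P (k + 1) with ht_def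
  have ht0 : ∀ k, 0 ≤ t k := fun k => div_nonneg (hb k) (hP _).le
  set Y : ℕ → ℝ := fun n => x0 + ∑ k ∈ range n, t k with hY_def
  have hXY : ∀ n, X n = P n * Y n := by
    intro n
    induction n with
    | zero => simp [hX0, hY_def, hP_def]
    | succ n ih =>
      have hPn : P (n + 1) = P n * a n := prod_range_succ _ _
      have hYn : Y (n + 1) = Y n + t n := by
        simp [hY_def, sum_range_succ, add_assoc]
      rw [hXs n, ih, hYn, hPn, ht_def]
      have : P n * a n ≠ 0 := (mul_pos (hP n) (ha n)).ne'
      simp only [hPn]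
      rw [mul_add (P n * a n), mul_div_assoc', mul_div_cancel_left₀ _ this]
      simp only [hY_def]
      ring
  -- summability of t
  set r : ℝ := Real.exp (-(γ / 2)) with hr_def
  have hr0 : 0 < r := Real.exp_pos _
  have hr1 : r < 1 := Real.exp_lt_one_iff.mpr (by linarith)
  have hev : ∀ᶠ k : ℕ in atTop, t k ≤ r ^ k := by
    have h1 : Tendsto (fun k : ℕ => (Real.log (max (b k) 1) - s (k + 1)) / k) atTop
        (𝓝 (0 - γ)) :=
      (hm.sub (aux_shift_div hs)).congr (fun n => (sub_div _ _ _).symm)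
    have h2 : ∀ᶠ k : ℕ in atTop,
        (Real.log (max (b k) 1) - s (k + 1)) / k < -(γ / 2) :=
      h1.eventually_lt_const (by linarith)
    filter_upwards [h2, eventually_ge_atTop 1] with k hk hk1
    have hkpos : (0 : ℝ) < k := by exact_mod_cast Nat.pos_of_ne_zero (by omega)
    have hle : Real.log (max (b k) 1) - s (k + 1) ≤ -(γ / 2) * (k : ℝ) :=
      (div_le_iff₀ hkpos).mp hk.le
    calc t k ≤ max (b k) 1 / P (k + 1) :=
          (div_le_div_iff_of_pos_right (hP _)).mpr (le_max_left _ _)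
      _ = Real.exp (Real.log (max (b k) 1) - s (k + 1)) := by
          rw [Real.exp_sub, ← hPexp (k + 1),
            Real.exp_log (lt_of_lt_of_le one_pos (le_max_right _ _))]
      _ ≤ Real.exp (-(γ / 2) * (k : ℝ)) := Real.exp_le_exp.mpr hle
      _ = r ^ k := by rw [hr_def, ← Real.exp_nat_mul, mul_comm]
  obtain ⟨N, hN⟩ := eventually_atTop.mp hev
  have hsum : Summable t := by
    rw [← summable_nat_add_iff N]
    refine Summable.of_nonneg_of_le (fun k => ht0 _) (fun k => ?_)
      (summable_geometric_of_lt_one hr0.le hr1)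
    exact le_trans (hN _ (Nat.le_add_left N k))
      (pow_le_pow_of_le_one hr0.le hr1.le (Nat.le_add_right k N))
  set C : ℝ := x0 + ∑' k, t k with hC_def
  have hYC : ∀ n, Y n ≤ C :=
    fun n => add_le_add_right (Summable.sum_le_tsum (range n) (fun i _ => ht0 i) hsum) x0
  have hc : 0 < t k₀ := div_pos hk₀ (hP _)
  have hYc : ∀ n, k₀ + 1 ≤ n → t k₀ ≤ Y n := by
    intro n hn
    have h1 : t k₀ ≤ ∑ k ∈ range n, t k :=
      single_le_sum (fun i _ => ht0 i) (mem_range.mpr (by omega))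
    simp only [hY_def]
    linarith
  have hCpos : 0 < C := lt_of_lt_of_le hc (le_trans (hYc (k₀ + 1) le_rfl) (hYC _))
  have hlogY : Tendsto (fun n : ℕ => Real.log (Y n) / n) atTop (𝓝 0) := by
    apply tendsto_of_tendsto_of_tendsto_of_le_of_le'
      (tendsto_const_div_atTop_nhds_zero_nat (Real.log (t k₀)))
      (tendsto_const_div_atTop_nhds_zero_nat (Real.log C))
    · filter_upwards [eventually_ge_atTop (k₀ + 1)] with n hn
      have hnpos : (0 : ℝ) < n := by exact_mod_cast Nat.pos_of_ne_zero (by omega)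
      exact (div_le_div_iff_of_pos_right hnpos).mpr (Real.log_le_log hc (hYc n hn))
    · filter_upwards [eventually_ge_atTop (k₀ + 1)] with n hn
      have hnpos : (0 : ℝ) < n := by exact_mod_cast Nat.pos_of_ne_zero (by omega)
      exact (div_le_div_iff_of_pos_right hnpos).mpr
        (Real.log_le_log (lt_of_lt_of_le hc (hYc n hn)) (hYC n))
  have final : Tendsto (fun n : ℕ => s n / n + Real.log (Y n) / n) atTop (𝓝 (γ + 0)) :=
    hs.add hlogY
  rw [add_zero] at final
  apply final.congr'
  filter_upwards [eventually_ge_atTop (k₀ + 1)] with n hn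
  have hYn : 0 < Y n := lt_of_lt_of_le hc (hYc n hn)
  rw [hXY n, Real.log_mul (hP n).ne' hYn.ne', hsP n, add_div]

theorem stmt14 {Ω : Type*} [MeasureSpace Ω] [IsProbabilityMeasure (ℙ : Measure Ω)]
    (A B : ℕ → Ω → ℝ)
    (hmeas : ∀ n, Measurable (fun ω => (A n ω, B n ω)))
    (hindep : iIndepFun (fun n ω => (A n ω, B n ω)) ℙ)
    (hident : ∀ n, IdentDistrib (fun ω => (A n ω, B n ω)) (fun ω => (A 0 ω, B 0 ω)) ℙ ℙ)
    (hpos : ∀ᵐ ω ∂(ℙ : Measure Ω), ∀ n, 0 < A n ω ∧ 0 ≤ B n ω)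
    (hB0 : (ℙ : Measure Ω) {ω | B 0 ω = 0} < 1)
    (hlogA : Integrable (fun ω => |Real.log (A 0 ω)|) ℙ)
    (hlogB : Integrable (fun ω => |Real.log (B 0 ω)|) ℙ)
    (hγpos : 0 < ∫ ω, Real.log (A 0 ω) ∂(ℙ : Measure Ω))
    (x₀ : ℝ) (hx₀ : 0 ≤ x₀)
    (X : ℕ → Ω → ℝ)
    (hX0 : ∀ ω, X 0 ω = x₀)
    (hXs : ∀ n ω, X (n + 1) ω = A n ω * X n ω + B n ω) :
    ∀ᵐ ω ∂(ℙ : Measure Ω),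
      Tendsto (fun n : ℕ => Real.log (X n ω) / n) atTop
        (nhds (∫ ω, Real.log (A 0 ω) ∂(ℙ : Measure Ω))) := by
  have hAmeas : ∀ n, Measurable (A n) := fun n => (measurable_fst.comp (hmeas n))
  have hBmeas : ∀ n, Measurable (B n) := fun n => (measurable_snd.comp (hmeas n))
  -- functions of the pair
  set gA : ℝ × ℝ → ℝ := fun p => Real.log p.1 with hgA_def
  set gB : ℝ × ℝ → ℝ := fun p => Real.log (max p.2 1) with hgB_def
  have hgA : Measurable gA := Real.measurable_log.comp measurable_fst
  have hgB : Measurable gB :=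
    Real.measurable_log.comp ((measurable_snd.max measurable_const))
  set L : ℕ → Ω → ℝ := fun n ω => Real.log (A n ω) with hL_def
  set M : ℕ → Ω → ℝ := fun n ω => Real.log (max (B n ω) 1) with hM_def
  have hLint : Integrable (L 0) ℙ := by
    refine hlogA.mono ((Real.measurable_log.comp (hAmeas 0)).aestronglyMeasurable) ?_
    filter_upwards with ω
    simp only [hL_def, Real.norm_eq_abs, abs_abs, le_refl]
  have hMint : Integrable (M 0) ℙ := by
    refine hlogB.mono ((Real.measurable_log.comp
      ((hBmeas 0).max measurable_const)).aestronglyMeasurable) ?_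
    filter_upwards with ω
    have hb : |Real.log (max (B 0 ω) 1)| ≤ |Real.log (B 0 ω)| := by
      rcases le_total (B 0 ω) 1 with h | h
      · rw [max_eq_right h]; simp
      · rw [max_eq_left h]
    simpa [Real.norm_eq_abs, abs_abs] using hb
  have hLindep : Pairwise (Function.onFun (IndepFun · · (ℙ : Measure Ω)) L) :=
    fun i j hij => (hindep.indepFun hij).comp hgA hgA
  have hMindep : Pairwise (Function.onFun (IndepFun · · (ℙ : Measure Ω)) M) :=
    fun i j hij => (hindep.indepFun hij).comp hgB hgB
  have hLident : ∀ i, IdentDistrib (L i) (L 0) ℙ ℙ := fun i => (hident i).comp hgA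
  have hMident : ∀ i, IdentDistrib (M i) (M 0) ℙ ℙ := fun i => (hident i).comp hgB
  have hSLLN_A := strong_law_ae_real L hLint hLindep hLident
  have hSLLN_B := strong_law_ae_real M hMint hMindep hMident
  -- almost surely some B k is nonzero
  have hBnz : ∀ᵐ ω ∂(ℙ : Measure Ω), ∃ k, B k ω ≠ 0 := by
    rw [ae_iff]
    push_neg
    set N : Set Ω := {ω | ∀ k, B k ω = 0} with hN_def
    have hsub : ∀ n : ℕ, N ⊆ ⋂ k ∈ range n, (fun ω => (A k ω, B k ω)) ⁻¹' {p | p.2 = 0} := by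
      intro n ω hω
      simp only [Set.mem_iInter, Set.mem_preimage, Set.mem_setOf_eq]
      intro k _
      exact hω k
    have hmeaset : MeasurableSet {p : ℝ × ℝ | p.2 = 0} :=
      measurable_snd (measurableSet_singleton 0)
    have hprod : ∀ n : ℕ,
        (ℙ : Measure Ω) (⋂ k ∈ range n, (fun ω => (A k ω, B k ω)) ⁻¹' {p | p.2 = 0})
          = (ℙ : Measure Ω) {ω | B 0 ω = 0} ^ n := by
      intro n
      rw [hindep.measure_inter_preimage_eq_mul (range n)
        (sets := fun _ => {p : ℝ × ℝ | p.2 = 0}) (fun i _ => hmeaset)]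
      have heach : ∀ k, (ℙ : Measure Ω) ((fun ω => (A k ω, B k ω)) ⁻¹' {p | p.2 = 0})
          = (ℙ : Measure Ω) {ω | B 0 ω = 0} := by
        intro k
        rw [(hident k).measure_mem_eq hmeaset]
        rfl
      rw [Finset.prod_congr rfl (fun k _ => heach k), Finset.prod_const, card_range]
    have hle : ∀ n : ℕ, (ℙ : Measure Ω) N ≤ (ℙ : Measure Ω) {ω | B 0 ω = 0} ^ n :=
      fun n => (hprod n) ▸ measure_mono (hsub n)
    have htend := ENNReal.tendsto_pow_atTop_nhds_zero_of_lt_one hB0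
    have := ge_of_tendsto' htend hle
    exact le_antisymm this (by simp)
  filter_upwards [hpos, hSLLN_A, hSLLN_B, hBnz] with ω h1 h2 h3 h4
  obtain ⟨k₀, hk₀⟩ := h4
  have hbk₀ : 0 < B k₀ ω := lt_of_le_of_ne (h1 k₀).2 (Ne.symm hk₀)
  exact aux_det (fun n => (h1 n).1) (fun n => (h1 n).2) hx₀ hγpos h2
    (aux_cesaro_diff h3) k₀ hbk₀ (fun n => X n ω) (hX0 ω) (fun n => hXs n ω)
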